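/- With B as above and s ∈ {−1,1}^n, the map z ↦ Bz is a bijection from the Hilbert basis H(R_s) onto the Hilbert basis H(𝕆_s ∩ Ker(A)), where the Hilbert basis of a pointed rational cone C is H(C) := {x ∈ C ∩ ℤ^k \ {0} : there do not exist y, z ∈ C ∩ ℤ^k \ {0} with x = y + z}. -/

import Mathlib

lemma tri_zero (m : ℕ) (H : Matrix (Fin m) (Fin m) ℤ)
    (htri : ∀ i j : Fin m, (i : ℕ) < (j : ℕ) → H i j = 0)
    (hdiag : ∀ i : Fin m, 0 < H i i)
    (v : Fin m → ℤ) (hv : ∀ i, ∑ j, H i j * v j = 0) : v = 0 := by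
  have key : ∀ k : ℕ, ∀ i : Fin m, (i : ℕ) < k → v i = 0 := by
    intro k
    induction k with
    | zero => intro i h; omega
    | succ k ih =>
      intro i _hik
      have hsum := hv i
      rw [Finset.sum_eq_single i] at hsum
      · rcases mul_eq_zero.mp hsum with h | h
        · exact absurd h (hdiag i).ne'
        · exact h
      · intro b _ hb
        rcases lt_or_gt_of_ne (fun h : (b : ℕ) = (i : ℕ) => hb (Fin.ext h)) with hlt | hgt
        · have : v b = 0 := ih b (by omega)
          simp [this]
        · simp [htri i b hgt]
      · intro h; exact absurd (Finset.mem_univ i) h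
  funext i
  exact key (i + 1) i (Nat.lt_succ_self _)

theorem hilbert_basis_bijection (m n : ℕ) (hmn : m ≤ n)
    (A : Matrix (Fin m) (Fin n) ℤ)
    (hrank : (A.map (Int.cast : ℤ → ℚ)).rank = m)
    (C : Matrix (Fin n) (Fin n) ℤ) (hC : C.det = 1 ∨ C.det = -1)
    (H : Matrix (Fin m) (Fin m) ℤ)
    (hH_tri : ∀ i j : Fin m, (i : ℕ) < (j : ℕ) → H i j = 0)
    (hH_diag : ∀ i : Fin m, 0 < H i i)
    (hAC : A * C = Matrix.of (fun i (j : Fin n) =>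
      if h : (j : ℕ) < m then H i ⟨j, h⟩ else 0))
    (B : Matrix (Fin n) (Fin (n - m)) ℤ)
    (hB : ∀ (j : Fin n) (k : Fin (n - m)),
      B j k = C j ⟨m + k, by have := k.isLt; omega⟩)
    (s : Fin n → ℤ) (hs : ∀ i, s i = 1 ∨ s i = -1) :
    Set.BijOn (B.mulVec : (Fin (n - m) → ℤ) → (Fin n → ℤ))
      {z : Fin (n - m) → ℤ | (∀ i, 0 ≤ s i * B.mulVec z i) ∧ z ≠ 0 ∧
        ¬∃ u v : Fin (n - m) → ℤ,
          (∀ i, 0 ≤ s i * B.mulVec u i) ∧ u ≠ 0 ∧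
          (∀ i, 0 ≤ s i * B.mulVec v i) ∧ v ≠ 0 ∧ z = u + v}
      {g : Fin n → ℤ | A.mulVec g = 0 ∧ (∀ i, 0 ≤ s i * g i) ∧ g ≠ 0 ∧
        ¬∃ u v : Fin n → ℤ,
          (A.mulVec u = 0 ∧ (∀ i, 0 ≤ s i * u i) ∧ u ≠ 0) ∧
          (A.mulVec v = 0 ∧ (∀ i, 0 ≤ s i * v i) ∧ v ≠ 0) ∧ g = u + v} := by
  -- C is invertible over ℤ
  have hu : IsUnit C.det := by
    rcases hC with h | h <;> simp [Int.isUnit_iff, h]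
  haveI : Invertible C := C.invertibleOfIsUnitDet hu
  -- an index equivalence
  let E : Fin m ⊕ Fin (n - m) ≃ Fin n :=
    { toFun := Sum.elim (fun i => ⟨(i : ℕ), by omega⟩)
        (fun k => ⟨m + (k : ℕ), by have := k.isLt; omega⟩)
      invFun := fun j => if h : (j : ℕ) < m then Sum.inl ⟨(j : ℕ), h⟩
        else Sum.inr ⟨(j : ℕ) - m, by have := j.isLt; omega⟩
      left_inv := by
        rintro (i | k)
        · simp
        · have : ¬ (m + (k : ℕ) < m) := by omega
          simp only [Sum.elim_inr, this, dif_neg, not_false_iff]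
          simp [this]
      right_inv := by
        intro j
        by_cases h : (j : ℕ) < m
        · simp [h]
        · simp only [h, dif_neg, not_false_iff, Sum.elim_inr]
          ext
          simp
          omega }
  -- padding map
  set pad : (Fin (n - m) → ℤ) → (Fin n → ℤ) :=
    fun z j => if h : m ≤ (j : ℕ) then z ⟨(j : ℕ) - m, by have := j.isLt; omega⟩ else 0
    with hpad
  -- B ∘ z = C ∘ pad z
  have hBC : ∀ z, B.mulVec z = C.mulVec (pad z) := by
    intro z
    funext j
    show ∑ k, B j k * z k = ∑ j', C j j' * pad z j'
    rw [← Equiv.sum_comp E (fun j' => C j j' * pad z j'), Fintype.sum_sum_type]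
    have h1 : ∀ i : Fin m, C j (E (Sum.inl i)) * pad z (E (Sum.inl i)) = 0 := by
      intro i
      have : ¬ m ≤ ((E (Sum.inl i) : Fin n) : ℕ) := by
        show ¬ m ≤ (i : ℕ); omega
      simp [hpad, this]
    rw [Finset.sum_congr rfl (fun i _ => h1 i), Finset.sum_const_zero, zero_add]
    apply Finset.sum_congr rfl
    intro k _
    have h2 : pad z (E (Sum.inr k)) = z k := by
      show pad z ⟨m + (k : ℕ), _⟩ = z k
      have : m ≤ m + (k : ℕ) := by omega
      simp only [hpad, this, dif_pos]
      congr 1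
      ext
      simp
    rw [h2, hB j k]
    rfl
  -- pad is injective
  have hpadinj : Function.Injective pad := by
    intro z z' h
    funext k
    have := congrFun h ⟨m + (k : ℕ), by have := k.isLt; omega⟩
    have hm : m ≤ m + (k : ℕ) := by omega
    simp only [hpad, hm, dif_pos] at this
    convert this using 2 <;> ext <;> simp
  -- C.mulVec is injective
  have hCinj : Function.Injective C.mulVec := by
    intro x y h
    have := congrArg (⅟C).mulVec h
    simpa [Matrix.mulVec_mulVec, invOf_mul_self] using this
  have hBinj : Function.Injective B.mulVec := by
    intro x y h
    rw [hBC, hBC] at h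
    exact hpadinj (hCinj h)
  -- A (B z) = 0
  have hAB : ∀ z, A.mulVec (B.mulVec z) = 0 := by
    intro z
    funext i
    rw [hBC, Matrix.mulVec_mulVec, hAC]
    simp only [Matrix.mulVec, dotProduct, Matrix.of_apply, Pi.zero_apply]
    apply Finset.sum_eq_zero
    intro j' _
    by_cases h : (j' : ℕ) < m
    · have : ¬ m ≤ (j' : ℕ) := by omega
      simp [hpad, this]
    · simp [h]
  -- surjectivity onto the kernel
  have hsurj : ∀ g : Fin n → ℤ, A.mulVec g = 0 → ∃ z, B.mulVec z = g := by
    intro g hg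
    set w := (⅟C).mulVec g with hw
    have hCw : C.mulVec w = g := by
      rw [hw, Matrix.mulVec_mulVec, mul_invOf_self, Matrix.one_mulVec]
    have hACw : (A * C).mulVec w = 0 := by
      rw [← Matrix.mulVec_mulVec, hCw, hg]
    -- first m coordinates of w vanish
    have hwlow : (fun i : Fin m => w (E (Sum.inl i))) = 0 := by
      apply tri_zero m H hH_tri hH_diag
      intro i
      have hrow := congrFun hACw i
      rw [hAC] at hrow
      simp only [Matrix.mulVec, dotProduct, Matrix.of_apply, Pi.zero_apply] at hrow
      rw [← Equiv.sum_comp E (fun j' => (if h : (j' : ℕ) < m then H i ⟨(j' : ℕ), h⟩ else 0) * w j'),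
        Fintype.sum_sum_type] at hrow
      have hr : ∀ k : Fin (n - m),
          (if h : ((E (Sum.inr k) : Fin n) : ℕ) < m then H i ⟨_, h⟩ else 0) * w (E (Sum.inr k)) = 0 := by
        intro k
        have : ¬ ((E (Sum.inr k) : Fin n) : ℕ) < m := by
          show ¬ m + (k : ℕ) < m; omega
        simp [this]
      rw [Finset.sum_congr rfl (fun k _ => hr k), Finset.sum_const_zero, add_zero] at hrow
      rw [← hrow]
      apply Finset.sum_congr rfl
      intro i' _
      have h : ((E (Sum.inl i') : Fin n) : ℕ) < m := i'.isLt
      rw [dif_pos h]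
      congr 1
    refine ⟨fun k => w (E (Sum.inr k)), ?_⟩
    have hpw : pad (fun k => w (E (Sum.inr k))) = w := by
      funext j
      by_cases h : m ≤ (j : ℕ)
      · show (if h : m ≤ (j : ℕ) then w (E (Sum.inr ⟨(j : ℕ) - m, _⟩)) else 0) = w j
        rw [dif_pos h]
        congr 1
        ext
        show m + ((j : ℕ) - m) = (j : ℕ)
        omega
      · show (if h : m ≤ (j : ℕ) then w (E (Sum.inr ⟨(j : ℕ) - m, _⟩)) else 0) = w j
        rw [dif_neg h]
        have h0 : w (E (Sum.inl ⟨(j : ℕ), by omega⟩)) = 0 := congrFun hwlow _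
        rw [show (E (Sum.inl ⟨(j : ℕ), by omega⟩) : Fin n) = j from Fin.ext rfl] at h0
        exact h0.symm
    rw [hBC, hpw, hCw]
  -- now the bijection
  constructor
  · -- MapsTo
    rintro z ⟨hz1, hz2, hz3⟩
    refine ⟨hAB z, hz1, fun h => hz2 (hBinj (by rw [h]; exact (B.mulVec_zero).symm ▸ rfl)), ?_⟩
    rintro ⟨u, v, ⟨hu0, hus, hune⟩, ⟨hv0, hvs, hvne⟩, huv⟩
    obtain ⟨u', hu'⟩ := hsurj u hu0
    obtain ⟨v', hv'⟩ := hsurj v hv0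
    apply hz3
    refine ⟨u', v', ?_, ?_, ?_, ?_, ?_⟩
    · intro i; rw [hu']; exact hus i
    · rintro rfl; exact hune (by rw [← hu', Matrix.mulVec_zero])
    · intro i; rw [hv']; exact hvs i
    · rintro rfl; exact hvne (by rw [← hv', Matrix.mulVec_zero])
    · apply hBinj
      rw [Matrix.mulVec_add, hu', hv', ← huv]
  constructor
  · -- InjOn
    intro x _ y _ h
    exact hBinj h
  · -- SurjOn
    rintro g ⟨hg0, hgs, hgne, hgdec⟩
    obtain ⟨z, hz⟩ := hsurj g hg0
    refine ⟨z, ⟨?_, ?_, ?_⟩, hz⟩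
    · intro i; rw [hz]; exact hgs i
    · rintro rfl; exact hgne (by rw [← hz, Matrix.mulVec_zero])
    · rintro ⟨u, v, hus, hune, hvs, hvne, huv⟩
      apply hgdec
      refine ⟨B.mulVec u, B.mulVec v, ⟨hAB u, hus, ?_⟩, ⟨hAB v, hvs, ?_⟩, ?_⟩
      · intro h; exact hune (hBinj (by rw [h, Matrix.mulVec_zero]))
      · intro h; exact hvne (hBinj (by rw [h, Matrix.mulVec_zero]))
      · rw [← hz, huv, Matrix.mulVec_add]
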